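/- arXiv:1603.03501 — 2 statements merged into one kernel-verified Lean document; each statement's English description precedes it below -/
import Mathlib

section
/- Secret extraction correctness: Let Q be prime and P = 2Q+1 prime, g an element of order Q in the multiplicative group of Z_P. Let p(x) be a degree-t polynomial over Z_Q with constant term a_0, let x_0,...,x_{t-1}, x_i be t+1 distinct nonzero points of Z_Q, f(x_k) = p(x_k), and let lambda_k (for k = 0..t-1) and lambda_i be the Lagrangian coefficients at 0 for this node set. Then for any r in Z_Q and any tau in the subgroup generated by g, tau * g^{r a_0} divided by ( prod_{k=0}^{t-1} (g^{r f(x_k)})^{lambda_k} * (g^r)^{f(x_i) lambda_i} ) equals tau. -/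
open Finset Polynomial

/-- The Lagrangian coefficient at 0 of node `x k` with respect to the node family `x`. -/
def lagCoeff {Q n : ℕ} [Fact Q.Prime] (x : Fin n → ZMod Q) (k : Fin n) : ZMod Q :=
  ∏ j ∈ Finset.univ.erase k, x j / (x j - x k)

lemma pow_val_add {P Q : ℕ} [NeZero Q] (g : (ZMod P)ˣ) (hg : orderOf g = Q) (a b : ZMod Q) :
    g ^ (a + b).val = g ^ a.val * g ^ b.val := by
  rw [← pow_add]
  refine pow_eq_pow_iff_modEq.mpr ?_
  rw [hg, ZMod.val_add]
  exact Nat.mod_modEq _ _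

lemma pow_val_mul {P Q : ℕ} [NeZero Q] (g : (ZMod P)ˣ) (hg : orderOf g = Q) (a b : ZMod Q) :
    (g ^ a.val) ^ b.val = g ^ (a * b).val := by
  rw [← pow_mul]
  refine (pow_eq_pow_iff_modEq.mpr ?_).symm
  rw [hg, ZMod.val_mul]
  exact Nat.mod_modEq _ _

lemma prod_pow_val {P Q : ℕ} [NeZero Q] (g : (ZMod P)ˣ) (hg : orderOf g = Q)
    {ι : Type*} (s : Finset ι) (c : ι → ZMod Q) :
    ∏ i ∈ s, g ^ (c i).val = g ^ (∑ i ∈ s, c i).val := by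
  induction s using Finset.cons_induction with
  | empty => simp [ZMod.val_zero]
  | cons a s ha ih => rw [Finset.prod_cons, Finset.sum_cons, ih, pow_val_add g hg]

lemma interp_zero {Q t : ℕ} [Fact Q.Prime] (p : Polynomial (ZMod Q)) (hdeg : p.degree ≤ (t : ℕ))
    (x : Fin (t + 1) → ZMod Q) (hinj : Function.Injective x) :
    p.coeff 0 = ∑ k : Fin (t + 1), p.eval (x k) * lagCoeff x k := by
  have hcard : (#(Finset.univ : Finset (Fin (t + 1))) : WithBot ℕ) = ((t + 1 : ℕ) : WithBot ℕ) := by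
    simp
  have hdlt : p.degree < #(Finset.univ : Finset (Fin (t + 1))) := by
    rw [hcard]
    exact lt_of_le_of_lt hdeg (by exact_mod_cast Nat.lt_succ_self t)
  have h := Lagrange.eq_interpolate (f := p) (hinj.injOn) hdlt
  rw [coeff_zero_eq_eval_zero]
  conv_lhs => rw [h]
  rw [Lagrange.interpolate_apply, eval_finset_sum]
  refine Finset.sum_congr rfl fun k _ => ?_
  rw [eval_mul, eval_C]
  congr 1
  rw [Lagrange.basis, eval_prod, lagCoeff]
  refine Finset.prod_congr rfl fun j hj => ?_
  have hjk : x j ≠ x k := fun h' =>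
    (Finset.mem_erase.mp hj).1 (hinj h')
  rw [Lagrange.basisDivisor, eval_mul, eval_C, eval_sub, eval_X, eval_C]
  rw [zero_sub, div_eq_mul_inv, ← neg_sub (x j) (x k), mul_comm]
  rw [inv_neg, neg_mul, mul_neg, neg_neg]

/-- secret extraction correctness. -/
theorem stmt_1 (Q P t : ℕ) [Fact Q.Prime] (hP : P.Prime) (hPQ : P = 2 * Q + 1)
    (g : (ZMod P)ˣ) (hg : orderOf g = Q)
    (p : Polynomial (ZMod Q)) (hdeg : p.degree ≤ (t : ℕ))
    (x : Fin (t + 1) → ZMod Q) (hinj : Function.Injective x) (hnz : ∀ k, x k ≠ 0)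
    (r : ZMod Q) (τ : (ZMod P)ˣ) (hτ : τ ∈ Subgroup.zpowers g) :
    τ * g ^ (r * p.coeff 0).val /
        ((∏ k : Fin t, (g ^ (r * p.eval (x k.castSucc)).val) ^ (lagCoeff x k.castSucc).val) *
          (g ^ r.val) ^ (p.eval (x (Fin.last t)) * lagCoeff x (Fin.last t)).val) = τ := by
  haveI : NeZero Q := ⟨(Fact.out (p := Q.Prime)).ne_zero⟩
  have hden :
      ((∏ k : Fin t, (g ^ (r * p.eval (x k.castSucc)).val) ^ (lagCoeff x k.castSucc).val) *
          (g ^ r.val) ^ (p.eval (x (Fin.last t)) * lagCoeff x (Fin.last t)).val)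
        = g ^ (r * p.coeff 0).val := by
    simp_rw [pow_val_mul g hg]
    rw [prod_pow_val g hg, ← pow_val_add g hg]
    congr 1
    rw [interp_zero p hdeg x hinj, Finset.mul_sum, Fin.sum_univ_castSucc]
    ring_nf
  rw [hden, mul_div_assoc, div_self', mul_one]
end

section
/- Uniqueness of extraction outcome among legitimate users: for any two legitimate users u_i and u_j with distinct shares (x_i, f(x_i)) and (x_j, f(x_j)) on the same degree-≤t polynomial p over Z_Q, both disjoint from the server's t node points, the extraction procedure yields the same secret tau for both users. -/
open Finset Polynomial

section helpers
variable {Q : ℕ} [Fact Q.Prime] {G : Type*} [CommGroup G]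

lemma gpow_val_add (g : G) (hg : orderOf g = Q) (a b : ZMod Q) :
    g ^ (a + b).val = g ^ a.val * g ^ b.val := by
  rw [← pow_add]
  apply pow_eq_pow_iff_modEq.mpr
  rw [hg, ZMod.val_add]
  exact Nat.mod_modEq _ _

lemma gpow_val_mul (g : G) (hg : orderOf g = Q) (a b : ZMod Q) :
    (g ^ a.val) ^ b.val = g ^ (a * b).val := by
  rw [← pow_mul]
  apply pow_eq_pow_iff_modEq.mpr
  rw [hg, ZMod.val_mul]
  exact (Nat.mod_modEq _ _).symm

lemma gpow_val_sum (g : G) (hg : orderOf g = Q) {ι : Type*} (s : Finset ι) (f : ι → ZMod Q) :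
    g ^ (∑ i ∈ s, f i).val = ∏ i ∈ s, g ^ (f i).val := by
  classical
  induction s using Finset.induction with
  | empty => simp
  | insert a s h ih =>
    rw [Finset.sum_insert h, Finset.prod_insert h, gpow_val_add g hg, ih]

lemma lag_sum {t : ℕ} (p : Polynomial (ZMod Q)) (hdeg : p.degree ≤ (t : ℕ))
    (v : Fin (t + 1) → ZMod Q) (hv : Function.Injective v) :
    ∑ k, p.eval (v k) * lagCoeff v k = p.eval 0 := by
  have hvs : Set.InjOn v (Finset.univ : Finset (Fin (t+1))) := hv.injOn
  have hdlt : p.degree < (#(Finset.univ : Finset (Fin (t+1))) : ℕ) := by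
    rw [Finset.card_univ, Fintype.card_fin]
    exact lt_of_le_of_lt hdeg (by exact_mod_cast Nat.lt_succ_self t)
  have h := Lagrange.eq_interpolate hvs hdlt
  conv_rhs => rw [h]
  rw [Lagrange.interpolate_apply, eval_finset_sum]
  refine Finset.sum_congr rfl fun k _ => ?_
  rw [eval_mul, eval_C]
  congr 1
  rw [Lagrange.basis, eval_prod, lagCoeff]
  refine Finset.prod_congr rfl fun j _ => ?_
  rw [Lagrange.basisDivisor, eval_mul, eval_C, eval_sub, eval_X, eval_C]
  rw [div_eq_mul_inv, ← neg_sub (v j) (v k), inv_neg]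
  ring

end helpers

/-- any two legitimate users `u_i` (node `xi`) and `u_j` (node `xj`),
whose shares lie on the same polynomial `p` and are disjoint from the server's `t`
nodes `x`, extract the same secret.  The node family of a user with node `u` is
`Fin.snoc x u`. -/
theorem stmt_19 (Q P t : ℕ) [Fact Q.Prime] (hP : P.Prime) (hPQ : P = 2 * Q + 1)
    (g : (ZMod P)ˣ) (hg : orderOf g = Q)
    (p : Polynomial (ZMod Q)) (hdeg : p.degree ≤ (t : ℕ))
    (x : Fin t → ZMod Q) (hnz : ∀ k, x k ≠ 0)
    (xi xj : ZMod Q) (hij : xi ≠ xj) (hxi : xi ≠ 0) (hxj : xj ≠ 0)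
    (hinj_i : Function.Injective (Fin.snoc x xi : Fin (t + 1) → ZMod Q))
    (hinj_j : Function.Injective (Fin.snoc x xj : Fin (t + 1) → ZMod Q))
    (r : ZMod Q) (τ : (ZMod P)ˣ) (hτ : τ ∈ Subgroup.zpowers g)
    (γ : (ZMod P)ˣ) (hγ : γ = τ * g ^ (r * p.coeff 0).val) :
    γ / ((∏ k : Fin t,
            (g ^ (r * p.eval (x k)).val) ^
              (lagCoeff (Fin.snoc x xi : Fin (t + 1) → ZMod Q) k.castSucc).val) *
          (g ^ r.val) ^
            (p.eval xi * lagCoeff (Fin.snoc x xi : Fin (t + 1) → ZMod Q) (Fin.last t)).val)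
      = γ / ((∏ k : Fin t,
            (g ^ (r * p.eval (x k)).val) ^
              (lagCoeff (Fin.snoc x xj : Fin (t + 1) → ZMod Q) k.castSucc).val) *
          (g ^ r.val) ^
            (p.eval xj * lagCoeff (Fin.snoc x xj : Fin (t + 1) → ZMod Q) (Fin.last t)).val) := by
  have key : ∀ (u : ZMod Q), Function.Injective (Fin.snoc x u : Fin (t + 1) → ZMod Q) →
      (∏ k : Fin t,
            (g ^ (r * p.eval (x k)).val) ^
              (lagCoeff (Fin.snoc x u : Fin (t + 1) → ZMod Q) k.castSucc).val) *
          (g ^ r.val) ^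
            (p.eval u * lagCoeff (Fin.snoc x u : Fin (t + 1) → ZMod Q) (Fin.last t)).val
        = g ^ (r * p.eval 0).val := by
    intro u hinj
    set v : Fin (t + 1) → ZMod Q := Fin.snoc x u with hv
    have h1 : ∀ k : Fin t,
        (g ^ (r * p.eval (x k)).val) ^ (lagCoeff v k.castSucc).val
          = g ^ (r * p.eval (v k.castSucc) * lagCoeff v k.castSucc).val := by
      intro k
      rw [gpow_val_mul g hg]
      congr 2
      simp [hv]
    have h2 : (g ^ r.val) ^ (p.eval u * lagCoeff v (Fin.last t)).val
        = g ^ (r * p.eval (v (Fin.last t)) * lagCoeff v (Fin.last t)).val := by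
      rw [gpow_val_mul g hg]
      congr 2
      simp [hv]
      ring
    simp_rw [h1, h2]
    rw [← gpow_val_sum g hg, ← gpow_val_add g hg, ← Fin.sum_univ_castSucc
      (fun k => r * p.eval (v k) * lagCoeff v k)]
    congr 1
    simp_rw [mul_assoc]
    rw [← Finset.mul_sum, lag_sum p hdeg v hinj]
  rw [key xi hinj_i, key xj hinj_j]
end
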